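/- Shannon–Fano code existence: if p : ℕ → ℝ≥0 satisfies ∑_x p(x) ≤ 1 and p(x) > 0 for all x, then there exists a prefix-free code e : ℕ → {0,1}* such that |e(x)| ≤ ⌈log₂(1/p(x))⌉ + 2 for all x. -/

import Mathlib

open scoped ENNReal NNReal

/-- Big-endian `n`-bit binary encoding of `k`. -/
def sfEnc : ℕ → ℕ → List Bool
  | 0, _ => []
  | n+1, k => decide (2 ^ n ≤ k) :: sfEnc n (k % 2 ^ n)

lemma sfEnc_length (n k : ℕ) : (sfEnc n k).length = n := by
  induction n generalizing k with
  | zero => rfl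
  | succ n ih => simp [sfEnc, ih]

lemma sfEnc_prefix : ∀ {n m k j : ℕ}, k < 2 ^ n → j < 2 ^ m →
    sfEnc n k <+: sfEnc m j →
    ∃ t, m = n + t ∧ k * 2 ^ t ≤ j ∧ j < (k + 1) * 2 ^ t := by
  intro n
  induction n with
  | zero =>
    intro m k j hk hj _
    interval_cases k
    exact ⟨m, (Nat.zero_add m).symm, by simp, by simpa using hj⟩
  | succ n ih =>
    intro m k j hk hj h
    match m with
    | 0 => simp [sfEnc, List.prefix_nil] at h
    | m + 1 =>
      rw [sfEnc, sfEnc, List.cons_prefix_cons] at h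
      obtain ⟨hhead, htail⟩ := h
      have hk' : k % 2 ^ n < 2 ^ n := Nat.mod_lt _ (pow_pos two_pos n)
      have hj' : j % 2 ^ m < 2 ^ m := Nat.mod_lt _ (pow_pos two_pos m)
      obtain ⟨t, rfl, h1, h2⟩ := ih hk' hj' htail
      have hiff : (2 ^ n ≤ k) ↔ (2 ^ (n + t) ≤ j) := decide_eq_decide.mp hhead
      have hkd := Nat.div_add_mod k (2 ^ n)
      have hjd := Nat.div_add_mod j (2 ^ (n + t))
      have hc : k / 2 ^ n = j / 2 ^ (n + t) := by
        by_cases hle : 2 ^ n ≤ k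
        · have hle' := hiff.mp hle
          have h1' : k / 2 ^ n = 1 :=
            Nat.div_eq_of_lt_le (by simpa using hle)
              (by simpa [pow_succ, mul_comm] using hk)
          have h2' : j / 2 ^ (n + t) = 1 :=
            Nat.div_eq_of_lt_le (by simpa using hle')
              (by simpa [pow_succ, mul_comm] using hj)
          rw [h1', h2']
        · have hle' : ¬ 2 ^ (n + t) ≤ j := fun h => hle (hiff.mpr h)
          rw [Nat.div_eq_of_lt (by omega), Nat.div_eq_of_lt (by omega)]
      have hpow : 2 ^ (n + t) = 2 ^ n * 2 ^ t := pow_add 2 n t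
      refine ⟨t, by ring, ?_, ?_⟩
      · have hk2 : k * 2 ^ t = 2 ^ (n + t) * (j / 2 ^ (n + t)) + k % 2 ^ n * 2 ^ t :=
          calc k * 2 ^ t = (2 ^ n * (k / 2 ^ n) + k % 2 ^ n) * 2 ^ t := by rw [hkd]
            _ = 2 ^ (n + t) * (k / 2 ^ n) + k % 2 ^ n * 2 ^ t := by rw [hpow]; ring
            _ = 2 ^ (n + t) * (j / 2 ^ (n + t)) + k % 2 ^ n * 2 ^ t := by rw [hc]
        linarith [h1, hjd, hk2]
      · have hk3 : (k + 1) * 2 ^ t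
            = 2 ^ (n + t) * (j / 2 ^ (n + t)) + (k % 2 ^ n + 1) * 2 ^ t :=
          calc (k + 1) * 2 ^ t
              = (2 ^ n * (k / 2 ^ n) + k % 2 ^ n + 1) * 2 ^ t := by rw [hkd]
            _ = 2 ^ (n + t) * (k / 2 ^ n) + (k % 2 ^ n + 1) * 2 ^ t := by rw [hpow]; ring
            _ = 2 ^ (n + t) * (j / 2 ^ (n + t)) + (k % 2 ^ n + 1) * 2 ^ t := by rw [hc]
        linarith [h2, hjd, hk3]

/-- Shannon–Fano code existence: if `p : ℕ → ℝ≥0∞` satisfies `∑_x p(x) ≤ 1`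
and `p(x) > 0` for all `x`, then there is a prefix-free code
`e : ℕ → {0,1}*` with `|e(x)| ≤ ⌈log₂ (1/p(x))⌉ + 2` for all `x`. -/
theorem shannon_fano (p : ℕ → ℝ≥0∞) (hpos : ∀ x, 0 < p x)
    (hsum : ∑' x, p x ≤ 1) :
    ∃ e : ℕ → List Bool, Function.Injective e ∧
      (∀ x y : ℕ, e x <+: e y → e x = e y) ∧
      ∀ x : ℕ, ((e x).length : ℝ) ≤
        ⌈Real.logb 2 (1 / (p x).toReal)⌉ + 2 := by
  set R : ℕ → ℝ := fun x => (p x).toReal with hRdef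
  set S : ℕ → ℝ := fun x => ∑ y ∈ Finset.range x, R y with hSdef
  set N : ℕ → ℕ := fun x => (⌈Real.logb 2 (1 / R x)⌉ + 1).toNat with hNdef
  set K : ℕ → ℕ := fun x => (⌈S x * 2 ^ N x⌉).toNat with hKdef
  have hple : ∀ x, p x ≤ 1 := fun x => le_trans (ENNReal.le_tsum x) hsum
  have hpne : ∀ x, p x ≠ ∞ := fun x => (lt_of_le_of_lt (hple x) ENNReal.one_lt_top).ne
  have hRpos : ∀ x, 0 < R x := fun x => ENNReal.toReal_pos (hpos x).ne' (hpne x)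
  have hR1 : ∀ x, R x ≤ 1 := by
    intro x
    have := ENNReal.toReal_mono ENNReal.one_ne_top (hple x)
    simpa using this
  have hS0 : ∀ x, 0 ≤ S x := fun x =>
    Finset.sum_nonneg fun y _ => (hRpos y).le
  have hSd : ∀ x, S (x + 1) = S x + R x := fun x => Finset.sum_range_succ R x
  have hSmono : Monotone S := by
    intro a b hab
    exact Finset.sum_le_sum_of_subset_of_nonneg
      (Finset.range_subset_range.mpr hab) (fun y _ _ => (hRpos y).le)
  have hS1 : ∀ x, S x ≤ 1 := by
    intro x
    have h1 : ∑ y ∈ Finset.range x, p y ≤ 1 := le_trans (ENNReal.sum_le_tsum _) hsum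
    have h2 := ENNReal.toReal_mono ENNReal.one_ne_top h1
    rwa [ENNReal.toReal_sum (fun y _ => hpne y), ENNReal.toReal_one] at h2
  have hlogb0 : ∀ x, 0 ≤ Real.logb 2 (1 / R x) := by
    intro x
    apply Real.logb_nonneg one_lt_two
    rw [le_div_iff₀ (hRpos x), one_mul]
    exact hR1 x
  have hNcast : ∀ x, (N x : ℝ) = (⌈Real.logb 2 (1 / R x)⌉ : ℝ) + 1 := by
    intro x
    have h0 : (0 : ℤ) ≤ ⌈Real.logb 2 (1 / R x)⌉ + 1 := by
      have := Int.ceil_nonneg (hlogb0 x)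
      omega
    have hz : (N x : ℤ) = ⌈Real.logb 2 (1 / R x)⌉ + 1 := Int.toNat_of_nonneg h0
    exact_mod_cast hz
  have hK2 : ∀ x, 2 ≤ R x * 2 ^ N x := by
    intro x
    have hx1 : Real.logb 2 (1 / R x) + 1 ≤ (N x : ℝ) := by
      rw [hNcast x]
      have := Int.le_ceil (Real.logb 2 (1 / R x))
      linarith
    have hrp : (0 : ℝ) < 1 / R x := one_div_pos.mpr (hRpos x)
    have h2 : (2 : ℝ) / R x ≤ 2 ^ (N x : ℝ) := by
      have hb : (2 : ℝ) / R x = 2 ^ (Real.logb 2 (1 / R x) + 1) := by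
        rw [Real.rpow_add two_pos, Real.rpow_logb two_pos (by norm_num) hrp]
        rw [Real.rpow_one]
        field_simp
      rw [hb]
      exact Real.rpow_le_rpow_of_exponent_le one_le_two hx1
    rw [Real.rpow_natCast] at h2
    have := (div_le_iff₀ (hRpos x)).mp h2
    linarith [this]
  have hA : ∀ x, S x * 2 ^ N x ≤ (K x : ℝ) := by
    intro x
    have h0 : (0 : ℤ) ≤ ⌈S x * 2 ^ N x⌉ := Int.ceil_nonneg (by positivity)
    have hz : (K x : ℤ) = ⌈S x * 2 ^ N x⌉ := Int.toNat_of_nonneg h0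
    have hz' : (K x : ℝ) = ((⌈S x * 2 ^ N x⌉ : ℤ) : ℝ) := by exact_mod_cast congrArg (fun i : ℤ => (i : ℝ)) hz
    rw [hz']
    exact Int.le_ceil _
  have hB : ∀ x, (K x : ℝ) + 1 < (S x + R x) * 2 ^ N x := by
    intro x
    have h0 : (0 : ℤ) ≤ ⌈S x * 2 ^ N x⌉ := Int.ceil_nonneg (by positivity)
    have hz : (K x : ℤ) = ⌈S x * 2 ^ N x⌉ := Int.toNat_of_nonneg h0
    have hz' : (K x : ℝ) = ((⌈S x * 2 ^ N x⌉ : ℤ) : ℝ) := by exact_mod_cast congrArg (fun i : ℤ => (i : ℝ)) hz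
    have hlt : (K x : ℝ) < S x * 2 ^ N x + 1 := by
      rw [hz']
      exact Int.ceil_lt_add_one _
    have := hK2 x
    nlinarith [this, hlt]
  have hKlt : ∀ x, K x < 2 ^ N x := by
    intro x
    have h1 : (S x + R x) * 2 ^ N x ≤ 2 ^ N x := by
      have : S x + R x ≤ 1 := by rw [← hSd x]; exact hS1 (x + 1)
      nlinarith [this, pow_pos (zero_lt_two (α := ℝ)) (N x)]
    have h2 : (K x : ℝ) < ((2 ^ N x : ℕ) : ℝ) := by
      push_cast
      linarith [hB x]
    exact_mod_cast h2
  set e : ℕ → List Bool := fun x => sfEnc (N x) (K x) with hedef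
  have hMaster : ∀ x y, e x <+: e y → x = y := by
    intro x y h
    obtain ⟨t, ht, h1, h2⟩ := sfEnc_prefix (hKlt x) (hKlt y) h
    have hpow : (2 : ℝ) ^ N y = 2 ^ N x * 2 ^ t := by
      rw [ht, pow_add]
    have h1R : (K x : ℝ) * 2 ^ t ≤ (K y : ℝ) := by exact_mod_cast h1
    have h2R : (K y : ℝ) + 1 ≤ ((K x : ℝ) + 1) * 2 ^ t := by exact_mod_cast h2
    have hP : S x * 2 ^ N y ≤ (K y : ℝ) := by
      rw [hpow, ← mul_assoc]
      calc S x * 2 ^ N x * 2 ^ t ≤ (K x : ℝ) * 2 ^ t := by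
            have := hA x
            have h2t : (0:ℝ) < 2 ^ t := by positivity
            nlinarith
        _ ≤ (K y : ℝ) := h1R
    have hQ : (K y : ℝ) < (S x + R x) * 2 ^ N y := by
      have h2t : (0:ℝ) < 2 ^ t := by positivity
      have := hB x
      rw [hpow, ← mul_assoc]
      nlinarith
    by_contra hne
    rcases lt_trichotomy x y with hxy | hxy | hxy
    · have hle : S x + R x ≤ S y := by
        rw [← hSd x]; exact hSmono hxy
      have := hA y
      have h2Ny : (0:ℝ) < 2 ^ N y := by positivity
      nlinarith [hQ, this, hle]
    · exact hne hxy
    · have hle : S y + R y ≤ S x := by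
        rw [← hSd y]; exact hSmono hxy
      have := hB y
      have h2Ny : (0:ℝ) < 2 ^ N y := by positivity
      nlinarith [hP, this, hle]
  refine ⟨e, ?_, ?_, ?_⟩
  · intro a b hab
    exact hMaster a b (hab ▸ List.prefix_refl _)
  · intro a b h
    rw [hMaster a b h]
  · intro x
    have hlen : (e x).length = N x := sfEnc_length _ _
    rw [hlen, hNcast x]
    norm_num
    simp only [hRdef]
    linarith
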